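/- The number of integer n×n matrices of rank exactly r (over F_p, i.e., rank r mod p) with all entries bounded in absolute value by N is O_n(N^{2rn − r²}), because such a matrix is determined by the choice of an r×r invertible-mod-p submatrix together with all entries in those r rows and r columns. -/

import Mathlib

open Matrix Submodule Set Module

lemma key {n r : ℕ} {F : Type} [Field F] (A : Matrix (Fin n) (Fin n) F)
    (h : A.rank = r) :
    ∃ R C : Fin r → Fin n, Function.Injective R ∧
      ∀ i j, A i j = ∑ k, (∑ l, A i (C l) * (A.submatrix R C)⁻¹ l k) * A (R k) j := by
  classical
  -- rows
  obtain ⟨t, hts, htspan, htli⟩ := exists_linearIndependent F (Set.range A)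
  have htfin : t.Finite := (Set.finite_range A).subset hts
  haveI := htfin.fintype
  have hcard : Fintype.card t = r := by
    have h1 : finrank F (span F t) = t.toFinset.card := finrank_span_set_eq_card htli
    have h2 : A.rank = finrank F (span F (Set.range A)) := A.rank_eq_finrank_span_row
    rw [htspan] at h1
    rw [Set.toFinset_card] at h1
    omega
  obtain ⟨e⟩ : Nonempty (Fin r ≃ t) := ⟨(Fintype.equivFinOfCardEq hcard).symm⟩
  have hR : ∀ k : Fin r, ∃ i : Fin n, A i = (e k : Fin n → F) := fun k => hts (e k).2
  choose R hRs using hR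
  have hrows : (fun k => A (R k)) = fun k => ((e k : t) : Fin n → F) := funext hRs
  have hli : LinearIndependent F fun k => A (R k) := by
    rw [hrows]; exact htli.comp e e.injective
  have hRinj : Function.Injective R := by
    intro k k' hkk
    have : A (R k) = A (R k') := by rw [hkk]
    rw [hRs, hRs] at this
    exact e.injective (Subtype.ext this)
  have hrange : Set.range (fun k => A (R k)) = t := by
    rw [hrows]
    ext v
    constructor
    · rintro ⟨k, rfl⟩; exact (e k).2
    · intro hv
      exact ⟨e.symm ⟨v, hv⟩, by simp⟩
  -- the r × n matrix of chosen rows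
  set A' : Matrix (Fin r) (Fin n) F := A.submatrix R id with hA'
  have hA'rows : ∀ k, A' k = A (R k) := fun k => rfl
  have hA'rank : A'.rank = r := by
    have := hli.rank_matrix (M := A')
    simpa using this
  -- columns
  have hcolspan : span F (Set.range A'ᵀ) = ⊤ := by
    apply Submodule.eq_top_of_finrank_eq
    rw [show span F (Set.range A'ᵀ) = span F (Set.range A'.col) from rfl,
      ← Matrix.rank_eq_finrank_span_cols, hA'rank, finrank_pi]
    simp
  obtain ⟨u, hus, huspan, huli⟩ := exists_linearIndependent F (Set.range A'ᵀ)
  have hufin : u.Finite := (Set.finite_range A'ᵀ).subset hus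
  haveI := hufin.fintype
  have hucard : Fintype.card u = r := by
    have h1 : finrank F (span F u) = u.toFinset.card := finrank_span_set_eq_card huli
    rw [huspan, hcolspan, finrank_top, finrank_pi, Set.toFinset_card] at h1
    simpa using h1.symm
  obtain ⟨e'⟩ : Nonempty (Fin r ≃ u) := ⟨(Fintype.equivFinOfCardEq hucard).symm⟩
  have hC : ∀ l : Fin r, ∃ j : Fin n, A'ᵀ j = (e' l : Fin r → F) := fun l => hus (e' l).2
  choose C hCs using hC
  set M : Matrix (Fin r) (Fin r) F := A.submatrix R C with hM
  have hMcols : ∀ l, Mᵀ l = A'ᵀ (C l) := fun l => rfl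
  have hMunit : IsUnit M := by
    rw [← Matrix.linearIndependent_cols_iff_isUnit]
    have : (fun l => Mᵀ l) = fun l => ((e' l : u) : Fin r → F) := by
      funext l; rw [hMcols, hCs]
    show LinearIndependent F (fun l => Mᵀ l); rw [this]
    exact huli.comp e' e'.injective
  refine ⟨R, C, hRinj, fun i j => ?_⟩
  -- A i is in the span of the chosen rows
  have hmem : A i ∈ span F (Set.range fun k => A (R k)) := by
    rw [hrange, htspan]
    exact subset_span (Set.mem_range_self i)
  rw [mem_span_range_iff_exists_fun] at hmem
  obtain ⟨d, hd⟩ := hmem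
  have hdM : ∀ l, (d ᵥ* M) l = A i (C l) := by
    intro l
    have := congrFun hd (C l)
    simpa [Matrix.vecMul, dotProduct, hM] using this
  have hdrec : ∀ k, (∑ l, A i (C l) * M⁻¹ l k) = d k := by
    intro k
    have h1 : (fun l => A i (C l)) = d ᵥ* M := by funext l; rw [hdM]
    calc (∑ l, A i (C l) * M⁻¹ l k) = ((d ᵥ* M) ᵥ* M⁻¹) k := by
          rw [← h1]; simp [Matrix.vecMul, dotProduct]
      _ = d k := by
          have hdet : IsUnit M.det := (Matrix.isUnit_iff_isUnit_det M).1 hMunit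
          rw [Matrix.vecMul_vecMul, Matrix.mul_nonsing_inv M hdet, Matrix.vecMul_one]
  have hAij : (∑ k, d k • A (R k)) j = A i j := congrFun hd j
  rw [Finset.sum_apply] at hAij
  refine Eq.trans ?_ (Finset.sum_congr rfl fun k _ => congrArg (· * A (R k) j) (hdrec k)).symm
  simpa [Pi.smul_apply, smul_eq_mul] using hAij.symm

lemma sign_eq {p N : ℕ} (hNp : N < p) {x y : ℤ}
    (hx : |x| ≤ N) (hy : |y| ≤ N) (hc : (x : ZMod p) = y)
    (hs : decide (0 ≤ x) = decide (0 ≤ y)) : x = y := by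
  have hdvd : (p : ℤ) ∣ x - y := by
    have h0 : ((x - y : ℤ) : ZMod p) = 0 := by push_cast [hc]; ring
    exact (ZMod.intCast_zmod_eq_zero_iff_dvd _ p).1 h0
  have hiff : (0 ≤ x) ↔ (0 ≤ y) := by
    constructor <;> intro h <;> [skip; skip] <;>
      · by_contra h2
        simp [h, h2] at hs
  rw [abs_le] at hx hy
  have habs : |x - y| < p := by rw [abs_lt]; omega
  have := Int.eq_zero_of_abs_lt_dvd hdvd habs
  omega


lemma enc_eq {N : ℕ} {x y : ℤ} (hx : |x| ≤ N) (hy : |y| ≤ N)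
    (h : (x + N).toNat % (2*N+1) = (y + N).toNat % (2*N+1)) : x = y := by
  rw [abs_le] at hx hy
  rw [Nat.mod_eq_of_lt (by omega), Nat.mod_eq_of_lt (by omega)] at h
  omega

noncomputable def compEnum {n r : ℕ} (hr : r ≤ n) (R : Fin r → Fin n)
    (hinj : Function.Injective R) : Fin (n-r) → Fin n :=
  ((Finset.univ.image R)ᶜ).orderEmbOfFin
    (by rw [Finset.card_compl, Finset.card_image_of_injective _ hinj]; simp)

lemma compEnum_congr {n r : ℕ} (hr : r ≤ n) {R R' : Fin r → Fin n} (hR : R = R')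
    (h1 : Function.Injective R) (h2 : Function.Injective R') :
    compEnum hr R h1 = compEnum hr R' h2 := by subst hR; rfl

lemma compEnum_cover {n r : ℕ} (hr : r ≤ n) (R : Fin r → Fin n)
    (h : Function.Injective R) (i : Fin n) :
    (∃ k, R k = i) ∨ ∃ m, compEnum hr R h m = i := by
  by_cases hi : i ∈ Finset.univ.image R
  · left; obtain ⟨k, -, hk⟩ := Finset.mem_image.1 hi; exact ⟨k, hk⟩
  · right
    have h2 : i ∈ Set.range (compEnum hr R h) := by
      unfold compEnum
      rw [Finset.range_orderEmbOfFin]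
      simpa using hi
    exact h2

noncomputable def enc (N : ℕ) (x : ℤ) : Fin (2*N+1) :=
  ⟨(x + N).toNat % (2*N+1), Nat.mod_lt _ (by omega)⟩

lemma count_le {n r N p : ℕ} [Fact p.Prime] (hr : r ≤ n) (hN : 1 ≤ N) (hNp : N < p) :
    Nat.card {B : Matrix (Fin n) (Fin n) ℤ |
        (∀ i j, |B i j| ≤ (N : ℤ)) ∧ (B.map (Int.cast : ℤ → ZMod p)).rank = r} ≤
      n ^ r * n ^ r * (2*N+1) ^ (n*r) * (2*N+1) ^ (r*(n-r)) * 2 ^ (n*n) := by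
  classical
  set S := {B : Matrix (Fin n) (Fin n) ℤ |
      (∀ i j, |B i j| ≤ (N : ℤ)) ∧ (B.map (Int.cast : ℤ → ZMod p)).rank = r} with hS
  have hex : ∀ B : S, ∃ R C : Fin r → Fin n, Function.Injective R ∧
      ∀ i j, (B.1.map (Int.cast : ℤ → ZMod p)) i j =
        ∑ k, (∑ l, (B.1.map (Int.cast : ℤ → ZMod p)) i (C l) *
          ((B.1.map (Int.cast : ℤ → ZMod p)).submatrix R C)⁻¹ l k) *
          (B.1.map (Int.cast : ℤ → ZMod p)) (R k) j :=
    fun B => key _ B.2.2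
  choose R C hinj hform using hex
  set T := ((Fin r → Fin n) × (Fin r → Fin n) × (Fin r → Fin n → Fin (2*N+1)) ×
      (Fin (n-r) → Fin r → Fin (2*N+1)) × (Fin n → Fin n → Bool)) with hT
  set f : S → T := fun B =>
    (R B, C B, fun k j => enc N (B.1 (R B k) j),
      fun m l => enc N (B.1 (compEnum hr (R B) (hinj B) m) (C B l)),
      fun i j => decide (0 ≤ B.1 i j)) with hf
  have hfinj : Function.Injective f := by
    intro B B' hBB
    have h1 : R B = R B' := congrArg (fun t : T => t.1) hBB
    have h2 : C B = C B' := congrArg (fun t : T => t.2.1) hBB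
    have h3 := congrArg (fun t : T => t.2.2.1) hBB
    have h4 := congrArg (fun t : T => t.2.2.2.1) hBB
    have h5 := congrArg (fun t : T => t.2.2.2.2) hBB
    simp only [hf] at h3 h4 h5
    have hrowsE : ∀ k j, B.1 (R B k) j = B'.1 (R B k) j := by
      intro k j
      have := congrFun (congrFun h3 k) j
      rw [← h1, Fin.ext_iff] at this
      exact enc_eq (B.2.1 _ _) (B'.2.1 _ _) this
    have henum : compEnum hr (R B) (hinj B) = compEnum hr (R B') (hinj B') :=
      compEnum_congr hr h1 _ _
    have hcolsE : ∀ i l, B.1 i (C B l) = B'.1 i (C B l) := by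
      intro i l
      rcases compEnum_cover hr (R B) (hinj B) i with ⟨k, rfl⟩ | ⟨m, rfl⟩
      · exact hrowsE k _
      · have := congrFun (congrFun h4 m) l
        rw [← henum, ← h2, Fin.ext_iff] at this
        exact enc_eq (B.2.1 _ _) (B'.2.1 _ _) this
    have hmod : B.1.map (Int.cast : ℤ → ZMod p) = B'.1.map (Int.cast : ℤ → ZMod p) := by
      ext i j
      rw [hform B i j, hform B' i j, ← h1, ← h2]
      have hsub : (B.1.map (Int.cast : ℤ → ZMod p)).submatrix (R B) (C B) =
          (B'.1.map (Int.cast : ℤ → ZMod p)).submatrix (R B) (C B) := by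
        ext k l
        simp only [Matrix.submatrix_apply, Matrix.map_apply]
        rw [hrowsE]
      rw [hsub]
      refine Finset.sum_congr rfl fun k _ => ?_
      congr 1
      · refine Finset.sum_congr rfl fun l _ => ?_
        congr 1
        simp only [Matrix.map_apply]
        rw [hcolsE]
      · simp only [Matrix.map_apply]
        rw [hrowsE]
    apply Subtype.ext
    ext i j
    have hc : ((B.1 i j : ℤ) : ZMod p) = ((B'.1 i j : ℤ) : ZMod p) := by
      have := congrFun (congrFun (congrArg (fun M => M) hmod) i) j
      simpa only [Matrix.map_apply] using congrFun (congrFun hmod i) j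
    exact sign_eq hNp (B.2.1 i j) (B'.2.1 i j) hc (congrFun (congrFun h5 i) j)
  have := Nat.card_le_card_of_injective f hfinj
  have hcardT : Nat.card T = n ^ r * n ^ r * (2*N+1) ^ (n*r) * (2*N+1) ^ (r*(n-r)) * 2 ^ (n*n) := by
    simp [hT, Nat.card_eq_fintype_card, Fintype.card_fun, ← pow_mul]
    ring
  rw [hcardT] at this
  exact this

lemma nat_bound {n r N : ℕ} (hr : r ≤ n) (hN : 1 ≤ N) :
    n ^ r * n ^ r * (2*N+1) ^ (n*r) * (2*N+1) ^ (r*(n-r)) * 2 ^ (n*n) ≤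
      (n+1) ^ (2*n) * 3 ^ (3*(n*n)) * N ^ (2*r*n - r*r) := by
  have hexp : n*r + r*(n-r) = 2*r*n - r*r := by
    obtain ⟨d, rfl⟩ : ∃ d, n = r + d := ⟨n - r, by omega⟩
    have e1 : r + d - r = d := by omega
    have e2 : 2*r*(r+d) = r*r + ((r+d)*r + r*d) := by ring
    rw [e1, e2, Nat.add_sub_cancel_left]
  have hA : n ^ r * n ^ r ≤ (n+1)^(2*n) := by
    have h1 : n ^ r ≤ (n+1) ^ n :=
      le_trans (Nat.pow_le_pow_left (by omega) r) (Nat.pow_le_pow_right (by omega) hr)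
    calc n^r * n^r ≤ (n+1)^n * (n+1)^n := Nat.mul_le_mul h1 h1
      _ = (n+1)^(2*n) := by rw [← pow_add]; ring_nf
  have hB : (2*N+1) ^ (n*r) ≤ 3^(n*n) * N^(n*r) := by
    calc (2*N+1)^(n*r) ≤ (3*N)^(n*r) := Nat.pow_le_pow_left (by omega) _
      _ = 3^(n*r) * N^(n*r) := mul_pow _ _ _
      _ ≤ 3^(n*n) * N^(n*r) :=
          Nat.mul_le_mul_right _ (Nat.pow_le_pow_right (by omega) (Nat.mul_le_mul_left n hr))
  have hC : (2*N+1) ^ (r*(n-r)) ≤ 3^(n*n) * N^(r*(n-r)) := by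
    calc (2*N+1)^(r*(n-r)) ≤ (3*N)^(r*(n-r)) := Nat.pow_le_pow_left (by omega) _
      _ = 3^(r*(n-r)) * N^(r*(n-r)) := mul_pow _ _ _
      _ ≤ 3^(n*n) * N^(r*(n-r)) :=
          Nat.mul_le_mul_right _ (Nat.pow_le_pow_right (by omega)
            (Nat.mul_le_mul hr (Nat.sub_le n r)))
  have hD : 2^(n*n) ≤ 3^(n*n) := Nat.pow_le_pow_left (by omega) _
  calc n ^ r * n ^ r * (2*N+1) ^ (n*r) * (2*N+1) ^ (r*(n-r)) * 2 ^ (n*n)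
      ≤ (n+1)^(2*n) * (3^(n*n) * N^(n*r)) * (3^(n*n) * N^(r*(n-r))) * 3^(n*n) :=
        Nat.mul_le_mul (Nat.mul_le_mul (Nat.mul_le_mul hA hB) hC) hD
    _ = (n+1)^(2*n) * 3^(3*(n*n)) * (N^(n*r) * N^(r*(n-r))) := by ring
    _ = (n+1)^(2*n) * 3^(3*(n*n)) * N ^ (2*r*n - r*r) := by rw [← pow_add, hexp]


/-- The number of integer `n × n` matrices with all entries bounded in absolute value by
`N` whose reduction modulo a prime `p` (with `p > N`, as in the sieve setting where such
a matrix is determined by an invertible-mod-`p` `r × r` submatrix together with all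
entries in those `r` rows and `r` columns) has rank exactly `r` is `O_n(N^{2rn - r²})`. -/
theorem stmt15 (n : ℕ) : ∃ C : ℝ, 0 < C ∧
    ∀ (p : ℕ) [Fact p.Prime] (N : ℕ), 1 ≤ N → (N : ℕ) < p → ∀ r : ℕ,
      (Nat.card {B : Matrix (Fin n) (Fin n) ℤ |
          (∀ i j, |B i j| ≤ (N : ℤ)) ∧
          (B.map (Int.cast : ℤ → ZMod p)).rank = r} : ℝ) ≤
        C * (N : ℝ) ^ (2 * r * n - r * r) := by
  refine ⟨((n+1) ^ (2*n) * 3 ^ (3*(n*n)) : ℕ), by positivity, ?_⟩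
  intro p _ N hN hNp r
  by_cases hr : r ≤ n
  · have h1 := count_le (n := n) (r := r) (N := N) (p := p) hr hN hNp
    have h2 := nat_bound (n := n) (r := r) (N := N) hr hN
    have h3 := le_trans h1 h2
    calc (Nat.card {B : Matrix (Fin n) (Fin n) ℤ |
          (∀ i j, |B i j| ≤ (N : ℤ)) ∧
          (B.map (Int.cast : ℤ → ZMod p)).rank = r} : ℝ)
        ≤ (((n+1) ^ (2*n) * 3 ^ (3*(n*n)) * N ^ (2*r*n - r*r) : ℕ) : ℝ) := by
          exact_mod_cast h3
      _ = (((n+1) ^ (2*n) * 3 ^ (3*(n*n)) : ℕ) : ℝ) * (N : ℝ) ^ (2*r*n - r*r) := by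
          push_cast; ring
  · have hempty : {B : Matrix (Fin n) (Fin n) ℤ |
        (∀ i j, |B i j| ≤ (N : ℤ)) ∧
        (B.map (Int.cast : ℤ → ZMod p)).rank = r} = ∅ := by
      ext B
      simp only [Set.mem_setOf_eq, Set.mem_empty_iff_false, iff_false, not_and]
      intro _ hrank
      have := (B.map (Int.cast : ℤ → ZMod p)).rank_le_height
      omega
    rw [hempty]
    have : (Nat.card (∅ : Set (Matrix (Fin n) (Fin n) ℤ)) : ℝ) = 0 := by simp
    rw [this]
    positivity
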